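/- For every n ≥ 3, the Stepping Stones number satisfies a(n) ≥ 6(n−1); i.e., for each n ≥ 3 there exists an (n, 6(n−1))-placement. -/

import Mathlib

/-- Two cells of `ℤ²` are adjacent if they are distinct and differ by at most 1 in
each coordinate (the 8 surrounding cells). -/
def Adj (a b : ℤ × ℤ) : Prop :=
  a ≠ b ∧ (a.1 - b.1).natAbs ≤ 1 ∧ (a.2 - b.2).natAbs ≤ 1

instance : DecidableRel Adj := fun a b => by
  unfold Adj; infer_instance

/-- An `(n,m)`-placement in the Stepping Stones problem (OEIS A337663): an `n`-element
set `S` of cells of `ℤ²`, each holding a stone of value 1, together with pairwise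
distinct cells `p 2, p 3, …, p m`, all outside `S`, such that for each `2 ≤ k ≤ m`
the values of the already-placed stones on the 8 cells adjacent to `p k`
(value 1 for cells of `S`, value `j` for `p j` with `2 ≤ j < k`) sum to `k`.
For `m = 1` only the value-1 stones are placed and there is no condition. -/
def IsPlacement (n m : ℕ) : Prop :=
  ∃ (S : Finset (ℤ × ℤ)) (p : ℕ → ℤ × ℤ),
    S.card = n ∧
    (∀ j k, 2 ≤ j → j < k → k ≤ m → p j ≠ p k) ∧
    (∀ k, 2 ≤ k → k ≤ m → p k ∉ S) ∧
    (∀ k, 2 ≤ k → k ≤ m →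
      (S.filter (fun s => Adj s (p k))).card
        + ∑ j ∈ Finset.Ico 2 k, (if Adj (p j) (p k) then j else 0) = k)

namespace SteppingAux

/-- the 16 starter stones (values 2..17). -/
def st : ℕ → ℤ × ℤ
  | 2 => (-5,-4)
  | 3 => (-5,-3)
  | 4 => (-4,-2)
  | 5 => (-3,-3)
  | 6 => (-6,-4)
  | 7 => (-7,-4)
  | 8 => (-5,-2)
  | 9 => (-5,-5)
  | 10 => (-3,-2)
  | 11 => (-4,-5)
  | 12 => (-5,-1)
  | 13 => (-7,-3)
  | 14 => (-7,-5)
  | 15 => (-2,-2)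
  | 16 => (-1,-1)
  | 17 => (-1,0)
  | _ => (0,0)

/-- the stones for the `n ≥ 4` construction. -/
def pp (n k : ℕ) : ℤ × ℤ :=
  if k ≤ 17 then st k
  else if k ≤ 3*n+7 then ((k:ℤ)-18, 1)
  else if k = 3*n+8 then (3*(n:ℤ)-10, 0)
  else if k = 3*n+9 then (3*(n:ℤ)-9, -1)
  else if k = 3*n+10 then (3*(n:ℤ)-10, -2)
  else if k = 3*n+11 then (3*(n:ℤ)-11, -2)
  else (6*(n:ℤ)-(k:ℤ), -1)

def rowS (n : ℕ) : Finset (ℤ × ℤ) := (Finset.range (n-3)).image (fun j : ℕ => ((3*j : ℤ), (0:ℤ)))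

def SS (n : ℕ) : Finset (ℤ × ℤ) :=
  insert (-6,-5) (insert (-4,-3) (insert (3*(n:ℤ)-10, -1) (rowS n)))

lemma adj_mk (x1 y1 x2 y2 : ℤ) :
    Adj (x1,y1) (x2,y2) ↔
      (¬(x1 = x2 ∧ y1 = y2)) ∧ (x1-x2).natAbs ≤ 1 ∧ (y1-y2).natAbs ≤ 1 := by
  unfold Adj
  simp [Prod.ext_iff]

lemma st_bounds : ∀ j < 18, 2 ≤ j →
    -7 ≤ (st j).1 ∧ (st j).1 ≤ -1 ∧ -5 ≤ (st j).2 ∧ (st j).2 ≤ 0 := by decide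

lemma pp_st (n k : ℕ) (h : k ≤ 17) : pp n k = st k := by
  unfold pp; rw [if_pos h]

lemma mem_rowS {n : ℕ} {c : ℤ × ℤ} :
    c ∈ rowS n ↔ ∃ j : ℕ, j < n-3 ∧ (3*(j:ℤ), (0:ℤ)) = c := by
  unfold rowS
  simp [Finset.mem_image]

lemma not_mem_rowS (n : ℕ) (c : ℤ × ℤ) (hc : c.2 ≠ 0) : c ∉ rowS n := by
  rw [mem_rowS]
  rintro ⟨j, _, rfl⟩
  exact hc rfl

lemma not_mem_parts (n : ℕ) :
    ((-6,-5) : ℤ×ℤ) ∉ insert ((-4,-3) : ℤ×ℤ) (insert (3*(n:ℤ)-10, -1) (rowS n)) ∧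
    ((-4,-3) : ℤ×ℤ) ∉ insert ((3*(n:ℤ)-10, -1) : ℤ×ℤ) (rowS n) ∧
    ((3*(n:ℤ)-10, -1) : ℤ×ℤ) ∉ rowS n := by
  refine ⟨?_, ?_, not_mem_rowS n _ (by norm_num)⟩ <;>
      simp only [Finset.mem_insert, Prod.mk.injEq] <;> push_neg
  · exact ⟨by norm_num, fun _ => by norm_num, not_mem_rowS n _ (by norm_num)⟩
  · exact ⟨fun _ => by norm_num, not_mem_rowS n _ (by norm_num)⟩

lemma card_SS (n : ℕ) (hn : 4 ≤ n) : (SS n).card = n := by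
  obtain ⟨h1, h2, h3⟩ := not_mem_parts n
  unfold SS
  rw [Finset.card_insert_of_notMem h1, Finset.card_insert_of_notMem h2,
    Finset.card_insert_of_notMem h3]
  have : (rowS n).card = n - 3 := by
    unfold rowS
    rw [Finset.card_image_of_injective _ (fun a b hab => by
      simp only [Prod.mk.injEq] at hab; omega)]
    simp
  omega

lemma card_filter_insert (a : ℤ×ℤ) (s : Finset (ℤ×ℤ)) (p : ℤ×ℤ → Prop) [DecidablePred p]
    (h : a ∉ s) :
    ((insert a s).filter p).card = (if p a then 1 else 0) + (s.filter p).card := by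
  rw [Finset.filter_insert]
  by_cases hp : p a
  · rw [if_pos hp, if_pos hp, Finset.card_insert_of_notMem
      (fun hm => h (Finset.mem_filter.mp hm).1)]
    omega
  · rw [if_neg hp, if_neg hp]
    omega

lemma SS_filter_card (n : ℕ) (c : ℤ × ℤ) :
    ((SS n).filter (fun s => Adj s c)).card =
      ((if Adj (-6,-5) c then 1 else 0) + (if Adj (-4,-3) c then 1 else 0)
        + (if Adj (3*(n:ℤ)-10, -1) c then 1 else 0))
      + ((Finset.range (n-3)).filter (fun j : ℕ => Adj ((3*j : ℤ), (0:ℤ)) c)).card := by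
  obtain ⟨h1, h2, h3⟩ := not_mem_parts n
  unfold SS
  rw [card_filter_insert _ _ _ h1, card_filter_insert _ _ _ h2, card_filter_insert _ _ _ h3]
  have : ((rowS n).filter (fun s => Adj s c)).card
      = ((Finset.range (n-3)).filter (fun j : ℕ => Adj ((3*j : ℤ), (0:ℤ)) c)).card := by
    unfold rowS
    rw [Finset.filter_image]
    rw [Finset.card_image_of_injective _ (fun a b hab => by
      simp only [Prod.mk.injEq] at hab; omega)]
  omega

lemma st_table : ∀ k < 18, 2 ≤ k →
    (if Adj (-6,-5) (st k) then 1 else 0) + (if Adj (-4,-3) (st k) then 1 else 0) + 0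
      + (if Adj ((0:ℤ),(0:ℤ)) (st k) then 1 else 0)
      + (∑ j ∈ Finset.Ico 2 k, (if Adj (st j) (st k) then j else 0)) = k := by decide

lemma st_adj18 : ∀ j < 18, 2 ≤ j → (Adj (st j) ((0:ℤ),(1:ℤ)) ↔ j = 17) := by decide

lemma st_ne : ∀ j < 18, ∀ k < 18, 2 ≤ j → j < k → st j ≠ st k := by decide

lemma st_notS : ∀ k < 18, 2 ≤ k →
    st k ≠ (-6,-5) ∧ st k ≠ (-4,-3) := by decide

lemma row_filter_st (n : ℕ) (hn : 4 ≤ n) (cx cy : ℤ) (h1 : -7 ≤ cx) (h2 : cx ≤ -1) :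
    (Finset.range (n-3)).filter (fun j : ℕ => Adj ((3*j : ℤ), (0:ℤ)) (cx, cy))
      = if Adj ((0:ℤ),(0:ℤ)) (cx, cy) then {0} else ∅ := by
  by_cases hA : Adj ((0:ℤ),(0:ℤ)) (cx, cy)
  · rw [if_pos hA]
    rw [adj_mk] at hA
    ext j
    simp only [Finset.mem_filter, Finset.mem_range, Finset.mem_singleton, adj_mk]
    omega
  · rw [if_neg hA]
    rw [adj_mk] at hA
    ext j
    simp only [Finset.mem_filter, Finset.mem_range, Finset.notMem_empty, iff_false, adj_mk]
    omega

lemma row_filter_top (n k : ℕ) (hn : 4 ≤ n) (h1 : 18 ≤ k) (h2 : k ≤ 3*n+7) :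
    (Finset.range (n-3)).filter (fun j : ℕ => Adj ((3*j : ℤ), (0:ℤ)) ((k:ℤ)-18, 1))
      = {(k-17)/3} := by
  ext j
  simp only [Finset.mem_filter, Finset.mem_range, Finset.mem_singleton, adj_mk]
  omega

lemma row_filter_bot (n k : ℕ) (hn : 4 ≤ n) (h1 : 3*n+12 ≤ k) (h2 : k ≤ 6*n-6) :
    (Finset.range (n-3)).filter (fun j : ℕ => Adj ((3*j : ℤ), (0:ℤ)) (6*(n:ℤ)-(k:ℤ), -1))
      = {(6*n-k+1)/3} := by
  ext j
  simp only [Finset.mem_filter, Finset.mem_range, Finset.mem_singleton, adj_mk]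
  omega

lemma ppk_x (n k : ℕ) (hn : 4 ≤ n) (h19 : 19 ≤ k) (hkm : k ≤ 6*n-6) :
    1 ≤ (pp n k).1 := by
  unfold pp
  split_ifs <;> first | omega | (dsimp only; omega)

lemma pp_x_nonneg (n k : ℕ) (hn : 4 ≤ n) (h18 : 18 ≤ k) (hkm : k ≤ 6*n-6) :
    0 ≤ (pp n k).1 := by
  unfold pp
  split_ifs <;> first | omega | (dsimp only; omega)

set_option maxHeartbeats 1000000 in
lemma adj_char (n j k : ℕ) (hn : 4 ≤ n) (h18 : 18 ≤ k) (hkm : k ≤ 6*n-6)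
    (hj2 : 2 ≤ j) (hjk : j < k) :
    Adj (pp n j) (pp n k) ↔ j = k - 1 := by
  by_cases hj17 : j ≤ 17
  · rw [pp_st n j hj17]
    by_cases hk18 : k = 18
    · subst hk18
      have hpk : pp n 18 = ((0:ℤ), 1) := by
        unfold pp
        rw [if_neg (by omega), if_pos (by omega)]
        norm_num
      rw [hpk]
      simpa using st_adj18 j (by omega) hj2
    · have hb := st_bounds j (by omega) hj2
      have hx := ppk_x n k hn (by omega) hkm
      constructor
      · intro hA
        exfalso
        have h := hA.2.1
        omega
      · intro he
        omega
  · unfold pp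
    split_ifs <;> first
      | omega
      | (rw [adj_mk]; omega)


lemma card_one (n k : ℕ) (hn : 4 ≤ n) (h18 : 18 ≤ k) (hkm : k ≤ 6*n-6) :
    ((SS n).filter (fun s => Adj s (pp n k))).card = 1 := by
  rw [SS_filter_card]
  by_cases htop : k ≤ 3*n+7
  · have hpk : pp n k = ((k:ℤ)-18, 1) := by
      unfold pp; rw [if_neg (by omega), if_pos htop]
    rw [hpk, row_filter_top n k hn h18 htop,
      if_neg (by rw [adj_mk]; omega), if_neg (by rw [adj_mk]; omega),
      if_neg (by rw [adj_mk]; omega)]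
    simp
  · by_cases h8 : k = 3*n+8
    · have hpk : pp n k = (3*(n:ℤ)-10, 0) := by
        unfold pp; rw [if_neg (by omega), if_neg (by omega), if_pos h8]
      have hr : (Finset.range (n-3)).filter
          (fun j : ℕ => Adj ((3*j : ℤ), (0:ℤ)) (3*(n:ℤ)-10, 0)) = ∅ := by
        ext j
        simp only [Finset.mem_filter, Finset.mem_range, Finset.notMem_empty, iff_false, adj_mk]
        omega
      rw [hpk, hr, if_neg (by rw [adj_mk]; omega), if_neg (by rw [adj_mk]; omega),
        if_pos (by rw [adj_mk]; omega)]
      simp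
    · by_cases h9 : k = 3*n+9
      · have hpk : pp n k = (3*(n:ℤ)-9, -1) := by
          unfold pp; rw [if_neg (by omega), if_neg (by omega), if_neg h8, if_pos h9]
        have hr : (Finset.range (n-3)).filter
            (fun j : ℕ => Adj ((3*j : ℤ), (0:ℤ)) (3*(n:ℤ)-9, -1)) = ∅ := by
          ext j
          simp only [Finset.mem_filter, Finset.mem_range, Finset.notMem_empty, iff_false, adj_mk]
          omega
        rw [hpk, hr, if_neg (by rw [adj_mk]; omega), if_neg (by rw [adj_mk]; omega),
          if_pos (by rw [adj_mk]; omega)]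
        simp
      · by_cases h10 : k = 3*n+10
        · have hpk : pp n k = (3*(n:ℤ)-10, -2) := by
            unfold pp
            rw [if_neg (by omega), if_neg (by omega), if_neg h8, if_neg h9, if_pos h10]
          have hr : (Finset.range (n-3)).filter
              (fun j : ℕ => Adj ((3*j : ℤ), (0:ℤ)) (3*(n:ℤ)-10, -2)) = ∅ := by
            ext j
            simp only [Finset.mem_filter, Finset.mem_range, Finset.notMem_empty, iff_false,
              adj_mk]
            omega
          rw [hpk, hr, if_neg (by rw [adj_mk]; omega), if_neg (by rw [adj_mk]; omega),
            if_pos (by rw [adj_mk]; omega)]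
          simp
        · by_cases h11 : k = 3*n+11
          · have hpk : pp n k = (3*(n:ℤ)-11, -2) := by
              unfold pp
              rw [if_neg (by omega), if_neg (by omega), if_neg h8, if_neg h9, if_neg h10,
                if_pos h11]
            have hr : (Finset.range (n-3)).filter
                (fun j : ℕ => Adj ((3*j : ℤ), (0:ℤ)) (3*(n:ℤ)-11, -2)) = ∅ := by
              ext j
              simp only [Finset.mem_filter, Finset.mem_range, Finset.notMem_empty, iff_false,
                adj_mk]
              omega
            rw [hpk, hr, if_neg (by rw [adj_mk]; omega), if_neg (by rw [adj_mk]; omega),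
              if_pos (by rw [adj_mk]; omega)]
            simp
          · have hbot : 3*n+12 ≤ k := by omega
            have hpk : pp n k = (6*(n:ℤ)-(k:ℤ), -1) := by
              unfold pp
              rw [if_neg (by omega), if_neg (by omega), if_neg h8, if_neg h9, if_neg h10,
                if_neg h11]
            rw [hpk, row_filter_bot n k hn hbot hkm, if_neg (by rw [adj_mk]; omega),
              if_neg (by rw [adj_mk]; omega), if_neg (by rw [adj_mk]; omega)]
            simp

lemma sum_parent (n k : ℕ) (hn : 4 ≤ n) (h18 : 18 ≤ k) (hkm : k ≤ 6*n-6) :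
    ∑ j ∈ Finset.Ico 2 k, (if Adj (pp n j) (pp n k) then j else 0) = k - 1 := by
  have hcongr : ∀ j ∈ Finset.Ico 2 k,
      (if Adj (pp n j) (pp n k) then j else 0) = (if j = k-1 then j else 0) := by
    intro j hj
    obtain ⟨hj2, hjk⟩ := Finset.mem_Ico.mp hj
    by_cases hA : Adj (pp n j) (pp n k)
    · rw [if_pos hA, if_pos ((adj_char n j k hn h18 hkm hj2 hjk).mp hA)]
    · rw [if_neg hA, if_neg (fun he => hA ((adj_char n j k hn h18 hkm hj2 hjk).mpr he))]
  rw [Finset.sum_congr rfl hcongr,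
    Finset.sum_ite_eq' (Finset.Ico 2 k) (k-1) (fun j => j),
    if_pos (Finset.mem_Ico.mpr ⟨by omega, by omega⟩)]

lemma pp_ne (n j k : ℕ) (hn : 4 ≤ n) (hj2 : 2 ≤ j) (hjk : j < k) (hkm : k ≤ 6*n-6) :
    pp n j ≠ pp n k := by
  by_cases hj17 : j ≤ 17
  · by_cases hk17 : k ≤ 17
    · rw [pp_st n j hj17, pp_st n k hk17]
      exact st_ne j (by omega) k (by omega) hj2 hjk
    · rw [pp_st n j hj17]
      intro he
      have hb := st_bounds j (by omega) hj2
      have hx := pp_x_nonneg n k hn (by omega) hkm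
      rw [← he] at hx
      omega
  · unfold pp
    intro he
    split_ifs at he <;> first
      | omega
      | (rw [Prod.mk.injEq] at he; omega)

lemma pp_not_mem (n k : ℕ) (hn : 4 ≤ n) (hk2 : 2 ≤ k) (hkm : k ≤ 6*n-6) :
    pp n k ∉ SS n := by
  intro hmem
  rw [SS, Finset.mem_insert, Finset.mem_insert, Finset.mem_insert, mem_rowS] at hmem
  by_cases hk17 : k ≤ 17
  · rw [pp_st n k hk17] at hmem
    have hb := st_bounds k (by omega) hk2
    have hne := st_notS k (by omega) hk2
    rcases hmem with h | h | h | ⟨j, hj, h⟩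
    · exact hne.1 h
    · exact hne.2 h
    · have := congrArg Prod.fst h
      omega
    · have := congrArg Prod.fst h
      omega
  · unfold pp at hmem
    split_ifs at hmem <;> try omega
    all_goals
      rcases hmem with h | h | h | ⟨j, hj, h⟩ <;> (rw [Prod.mk.injEq] at h; omega)

end SteppingAux


/-- For every `n ≥ 3` the Stepping Stones number satisfies `a(n) ≥ 6(n-1)`:
an `(n, 6(n-1))`-placement exists. -/
theorem steppingStones_ge_six_mul (n : ℕ) (hn : 3 ≤ n) :
    IsPlacement n (6 * (n - 1)) := by
  open SteppingAux in
  by_cases hn3 : n = 3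
  · subst hn3
    refine ⟨{(-6,-5),(-4,-3),(9,9)}, st, by decide, ?_, ?_, ?_⟩
    · intro j k hj hjk hkm
      have tab : ∀ k < 13, ∀ j < 13, 2 ≤ j → j < k → st j ≠ st k := by decide
      exact tab k (by omega) j (by omega) hj hjk
    · intro k hk2 hkm
      have tab : ∀ k < 13, 2 ≤ k →
          st k ∉ ({(-6,-5),(-4,-3),(9,9)} : Finset (ℤ×ℤ)) := by decide
      exact tab k (by omega) hk2
    · intro k hk2 hkm
      have tab : ∀ k < 13, 2 ≤ k →
          ((({(-6,-5),(-4,-3),(9,9)} : Finset (ℤ×ℤ)).filter (fun s => Adj s (st k))).card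
            + ∑ j ∈ Finset.Ico 2 k, (if Adj (st j) (st k) then j else 0)) = k := by decide
      exact tab k (by omega) hk2
  · have hn4 : 4 ≤ n := by omega
    refine ⟨SS n, pp n, card_SS n hn4, ?_, ?_, ?_⟩
    · intro j k hj hjk hkm
      exact pp_ne n j k hn4 hj hjk (by omega)
    · intro k hk2 hkm
      exact pp_not_mem n k hn4 hk2 (by omega)
    · intro k hk2 hkm
      have hkm' : k ≤ 6*n-6 := by omega
      by_cases h17 : k ≤ 17
      · rw [pp_st n k h17, SS_filter_card]
        have hb := st_bounds k (by omega) hk2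
        rcases hst : st k with ⟨cx, cy⟩
        rw [hst] at hb
        simp only at hb
        rw [row_filter_st n hn4 cx cy (by omega) (by omega)]
        have hE : ¬ Adj (3*(n:ℤ)-10, -1) (cx, cy) := by
          rw [adj_mk]; omega
        rw [if_neg hE]
        have hcard : (if Adj ((0:ℤ),(0:ℤ)) (cx, cy) then ({0} : Finset ℕ) else ∅).card
            = if Adj ((0:ℤ),(0:ℤ)) (cx, cy) then 1 else 0 := by
          split_ifs <;> rfl
        rw [hcard]
        have hsum : ∑ j ∈ Finset.Ico 2 k, (if Adj (pp n j) (cx, cy) then j else 0)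
            = ∑ j ∈ Finset.Ico 2 k, (if Adj (st j) (cx, cy) then j else 0) := by
          refine Finset.sum_congr rfl (fun j hj => ?_)
          rw [pp_st n j (by have := Finset.mem_Ico.mp hj; omega)]
        rw [hsum]
        have tab := st_table k (by omega) hk2
        rw [hst] at tab
        omega
      · have h18 : 18 ≤ k := by omega
        rw [card_one n k hn4 h18 hkm', sum_parent n k hn4 h18 hkm']
        omega
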